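/- Let 0 < q < 1. The element 1 − x x* is neither a left nor a right zero divisor in P(D_q): for every a ∈ P(D_q), if (1 − x x*)·a = 0 or a·(1 − x x*) = 0 then a = 0. -/

import Mathlib

noncomputable section

/-- The free algebra ℂ⟨x, x*⟩ on two generators (generator 0 is `x`, generator 1 is `x*`). -/
abbrev FreeDisc : Type := FreeAlgebra ℂ (Fin 2)

/-- The defining relation of the quantum disc: x* x = q x x* + (1 - q)·1. -/
def discRel (q : ℝ) : FreeDisc → FreeDisc → Prop := fun a b =>
  a = FreeAlgebra.ι ℂ (1 : Fin 2) * FreeAlgebra.ι ℂ (0 : Fin 2) ∧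
  b = (q : ℂ) • (FreeAlgebra.ι ℂ (0 : Fin 2) * FreeAlgebra.ι ℂ (1 : Fin 2)) +
      ((1 : ℂ) - (q : ℂ)) • 1

/-- The polynomial quantum disc algebra P(D_q). -/
abbrev QDisc (q : ℝ) : Type := RingQuot (discRel q)

/-- The generator x of P(D_q). -/
def xq (q : ℝ) : QDisc q := RingQuot.mkAlgHom ℂ (discRel q) (FreeAlgebra.ι ℂ 0)

/-- The generator x* of P(D_q). -/
def xsq (q : ℝ) : QDisc q := RingQuot.mkAlgHom ℂ (discRel q) (FreeAlgebra.ι ℂ 1)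


open Finsupp
abbrev V : Type := (ℕ × ℕ) →₀ ℂ
def eV (p : ℕ × ℕ) : V := Finsupp.single p 1
lemma single_eq_smul_eV (p : ℕ × ℕ) (c : ℂ) : Finsupp.single p c = c • eV p := by
  simp [eV, Finsupp.smul_single]
def Xop : Module.End ℂ V := Finsupp.lmapDomain ℂ ℂ (fun p => (p.1 + 1, p.2))
def Sop : Module.End ℂ V := Finsupp.lmapDomain ℂ ℂ (fun p => (p.1 + 1, p.2 + 1))
def XsOp (q : ℝ) : Module.End ℂ V :=
  Finsupp.lsum ℂ (fun p => LinearMap.toSpanSingleton ℂ V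
    ((q:ℂ)^p.1 • eV (p.1, p.2+1) + (1 - (q:ℂ)^p.1) • eV (p.1 - 1, p.2)))
def Dop (q : ℝ) : Module.End ℂ V :=
  Finsupp.lsum ℂ (fun p => LinearMap.toSpanSingleton ℂ V ((q:ℂ)^p.1 • eV p))
lemma Xop_eV (p : ℕ × ℕ) : Xop (eV p) = eV (p.1 + 1, p.2) := by
  simp [Xop, eV, Finsupp.mapDomain_single]
lemma Sop_eV (p : ℕ × ℕ) : Sop (eV p) = eV (p.1 + 1, p.2 + 1) := by
  simp [Sop, eV, Finsupp.mapDomain_single]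
lemma XsOp_eV (q : ℝ) (p : ℕ × ℕ) :
    XsOp q (eV p) = (q:ℂ)^p.1 • eV (p.1, p.2+1) + (1 - (q:ℂ)^p.1) • eV (p.1 - 1, p.2) := by
  simp only [XsOp, eV, Finsupp.lsum_single, LinearMap.toSpanSingleton_apply, one_smul]
lemma Dop_eV (q : ℝ) (p : ℕ × ℕ) : Dop q (eV p) = (q:ℂ)^p.1 • eV p := by
  simp only [Dop, eV, Finsupp.lsum_single, LinearMap.toSpanSingleton_apply, one_smul]

lemma relV (q : ℝ) :
    XsOp q * Xop = (q:ℂ) • (Xop * XsOp q) + (1 - (q:ℂ)) • (1 : Module.End ℂ V) := by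
  apply Finsupp.lhom_ext
  intro p c
  rw [single_eq_smul_eV]
  obtain ⟨i, j⟩ := p
  simp only [map_smul, Module.End.mul_apply, LinearMap.add_apply, LinearMap.smul_apply,
    Module.End.one_apply, map_add, Xop_eV, XsOp_eV]
  cases i with
  | zero =>
    norm_num
  | succ i =>
    simp only [Nat.add_sub_cancel]
    module

lemma uV_eq (q : ℝ) :
    (1 : Module.End ℂ V) - Xop * XsOp q = (1 - Sop) * Dop q := by
  apply Finsupp.lhom_ext
  intro p c
  rw [single_eq_smul_eV]
  obtain ⟨i, j⟩ := p
  simp only [map_smul, Module.End.mul_apply, LinearMap.sub_apply, LinearMap.smul_apply,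
    Module.End.one_apply, map_add, Xop_eV, XsOp_eV, Sop_eV, Dop_eV]
  cases i with
  | zero =>
    norm_num
  | succ i =>
    simp only [Nat.add_sub_cancel]
    module

lemma Dop_inj (q : ℝ) (hq : (q:ℂ) ≠ 0) : Function.Injective (Dop q) := by
  set D' : Module.End ℂ V :=
    Finsupp.lsum ℂ (fun p => LinearMap.toSpanSingleton ℂ V (((q:ℂ)^p.1)⁻¹ • eV p)) with hD'
  have h : D' ∘ₗ Dop q = LinearMap.id := by
    apply Finsupp.lhom_ext
    intro p c
    rw [single_eq_smul_eV]
    simp only [LinearMap.comp_apply, map_smul, Dop_eV, LinearMap.id_apply, hD']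
    rw [smul_smul, eV, Finsupp.lsum_single, LinearMap.toSpanSingleton_apply, one_smul,
      smul_smul, mul_assoc, mul_inv_cancel₀ (pow_ne_zero _ hq), mul_one, single_eq_smul_eV, eV]
    rw [one_smul]
  intro a b hab
  have := congrArg D' hab
  calc a = (D' ∘ₗ Dop q) a := by rw [h]; rfl
    _ = (D' ∘ₗ Dop q) b := by simpa using this
    _ = b := by rw [h]; rfl

lemma Sop_inj : Function.Injective ((1 : Module.End ℂ V) - Sop) := by
  rw [injective_iff_map_eq_zero]
  intro v hv
  by_contra hne
  have hvS : v = Sop v := by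
    have : v - Sop v = 0 := by simpa using hv
    linear_combination (norm := module) this
  -- support argument
  have hsupp : v.support = v.support.image (fun p => (p.1 + 1, p.2 + 1)) := by
    conv_lhs => rw [hvS]
    exact Finsupp.mapDomain_support_of_injective
      (fun p p' h => by
        simp only [Prod.mk.injEq, Nat.add_right_cancel_iff] at h
        exact Prod.ext h.1 h.2) v
  have hne' : v.support.Nonempty := Finsupp.support_nonempty_iff.mpr hne
  have hmax : v.support.sup' hne' (fun p => p.1) = v.support.sup' hne' (fun p => p.1) + 1 := by
    conv_lhs => rw [Finset.sup'_congr hne' hsupp (fun _ _ => rfl)]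
    rw [Finset.sup'_image]
    have h2 : v.support.sup' hne' ((fun p : ℕ × ℕ => p.1) ∘ (fun p : ℕ × ℕ => (p.1 + 1, p.2 + 1)))
        = v.support.sup' hne' ((fun n => n + 1) ∘ (fun p : ℕ × ℕ => p.1)) := rfl
    rw [h2, ← Finset.comp_sup'_eq_sup'_comp hne' (fun n => n + 1) (fun x y => by omega)]
  omega


def fGen (q : ℝ) : Fin 2 → Module.End ℂ V := ![Xop, XsOp q]

def Fhom (q : ℝ) : FreeDisc →ₐ[ℂ] Module.End ℂ V := FreeAlgebra.lift ℂ (fGen q)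

lemma Fhom_rel (q : ℝ) : ∀ ⦃a b⦄, discRel q a b → Fhom q a = Fhom q b := by
  rintro a b ⟨rfl, rfl⟩
  simp only [map_mul, map_add, map_smul, map_one, Fhom, FreeAlgebra.lift_ι_apply, fGen,
    Matrix.cons_val_zero, Matrix.cons_val_one, Matrix.head_cons]
  exact relV q

def phi (q : ℝ) : QDisc q →ₐ[ℂ] Module.End ℂ V :=
  RingQuot.liftAlgHom ℂ ⟨Fhom q, Fhom_rel q⟩

lemma phi_x (q : ℝ) : phi q (xq q) = Xop := by
  rw [xq, phi, RingQuot.liftAlgHom_mkAlgHom_apply]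
  simp [Fhom, fGen]

lemma phi_xs (q : ℝ) : phi q (xsq q) = XsOp q := by
  rw [xsq, phi, RingQuot.liftAlgHom_mkAlgHom_apply]
  simp [Fhom, fGen]

lemma relQ (q : ℝ) :
    xsq q * xq q = (q:ℂ) • (xq q * xsq q) + ((1:ℂ) - (q:ℂ)) • 1 := by
  have := RingQuot.mkAlgHom_rel ℂ (show discRel q
    (FreeAlgebra.ι ℂ (1 : Fin 2) * FreeAlgebra.ι ℂ (0 : Fin 2))
    ((q : ℂ) • (FreeAlgebra.ι ℂ (0 : Fin 2) * FreeAlgebra.ι ℂ (1 : Fin 2)) +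
      ((1 : ℂ) - (q : ℂ)) • 1) from ⟨rfl, rfl⟩)
  simp only [map_add, map_smul, map_mul, map_one] at this
  simpa [xq, xsq] using this

/-- Any submodule containing 1 and closed under left multiplication by the generators
is everything. -/
lemma genLemma (q : ℝ) (T : Submodule ℂ (QDisc q)) (h1 : (1 : QDisc q) ∈ T)
    (hx : ∀ a ∈ T, xq q * a ∈ T) (hxs : ∀ a ∈ T, xsq q * a ∈ T) (a : QDisc q) : a ∈ T := by
  obtain ⟨b, rfl⟩ := RingQuot.mkAlgHom_surjective ℂ (discRel q) a
  have key : ∀ b : FreeDisc, ∀ c ∈ T, RingQuot.mkAlgHom ℂ (discRel q) b * c ∈ T := by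
    intro b
    induction b using FreeAlgebra.induction with
    | grade0 r =>
      intro c hc
      rw [AlgHom.commutes, ← Algebra.smul_def]
      exact T.smul_mem r hc
    | grade1 i =>
      intro c hc
      fin_cases i
      · exact hx c hc
      · exact hxs c hc
    | mul a b ha hb =>
      intro c hc
      rw [map_mul, mul_assoc]
      exact ha _ (hb _ hc)
    | add a b ha hb =>
      intro c hc
      rw [map_add, add_mul]
      exact T.add_mem (ha _ hc) (hb _ hc)
  simpa using key b 1 h1

lemma commQ (q : ℝ) : ∀ i : ℕ,
    xsq q * xq q ^ i =
      ((q:ℂ))^i • (xq q ^ i * xsq q) + ((1:ℂ) - (q:ℂ)^i) • xq q ^ (i - 1) := by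
  intro i
  induction i with
  | zero => simp
  | succ i ih =>
    have hstep : ((1:ℂ) - (q:ℂ)^i) • (xq q ^ (i-1) * xq q) = ((1:ℂ) - (q:ℂ)^i) • xq q ^ i := by
      cases i with
      | zero => simp
      | succ i => rw [Nat.add_sub_cancel, ← pow_succ]
    calc xsq q * xq q ^ (i+1) = (xsq q * xq q ^ i) * xq q := by rw [pow_succ, mul_assoc]
      _ = ((q:ℂ))^i • (xq q ^ i * (xsq q * xq q)) + ((1:ℂ) - (q:ℂ)^i) • (xq q ^ (i-1) * xq q) := by
          rw [ih, add_mul, smul_mul_assoc, smul_mul_assoc, mul_assoc]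
      _ = ((q:ℂ))^i • (xq q ^ i * ((q:ℂ) • (xq q * xsq q) + ((1:ℂ) - (q:ℂ)) • 1))
            + ((1:ℂ) - (q:ℂ)^i) • xq q ^ i := by rw [relQ, hstep]
      _ = ((q:ℂ))^(i+1) • (xq q ^ (i+1) * xsq q) + ((1:ℂ) - (q:ℂ)^(i+1)) • xq q ^ ((i+1) - 1) := by
          rw [Nat.add_sub_cancel, mul_add, pow_succ]
          simp only [mul_smul_comm, smul_smul, mul_one, pow_succ]
          rw [← mul_assoc]
          match_scalars <;> ring

def PsiMap (q : ℝ) : V →ₗ[ℂ] QDisc q :=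
  Finsupp.lsum ℂ (fun p => LinearMap.toSpanSingleton ℂ (QDisc q) (xq q ^ p.1 * xsq q ^ p.2))

lemma PsiMap_eV (q : ℝ) (p : ℕ × ℕ) : PsiMap q (eV p) = xq q ^ p.1 * xsq q ^ p.2 := by
  simp only [PsiMap, eV, Finsupp.lsum_single, LinearMap.toSpanSingleton_apply, one_smul]

lemma Psi_X (q : ℝ) : PsiMap q ∘ₗ Xop = LinearMap.mulLeft ℂ (xq q) ∘ₗ PsiMap q := by
  apply Finsupp.lhom_ext
  intro p c
  rw [single_eq_smul_eV]
  simp only [LinearMap.comp_apply, map_smul, Xop_eV, PsiMap_eV, LinearMap.mulLeft_apply]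
  rw [pow_succ']
  rw [mul_assoc]

lemma Psi_Xs (q : ℝ) : PsiMap q ∘ₗ XsOp q = LinearMap.mulLeft ℂ (xsq q) ∘ₗ PsiMap q := by
  apply Finsupp.lhom_ext
  intro p c
  rw [single_eq_smul_eV]
  simp only [LinearMap.comp_apply, map_smul, XsOp_eV, PsiMap_eV, LinearMap.mulLeft_apply,
    map_add]
  congr 1
  rw [← mul_assoc, commQ q p.1, add_mul, smul_mul_assoc, smul_mul_assoc, mul_assoc,
    ← pow_succ']

def PhiMap (q : ℝ) : QDisc q →ₗ[ℂ] V :=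
  (LinearMap.applyₗ (eV (0, 0))).comp (phi q).toLinearMap

lemma PhiMap_apply (q : ℝ) (a : QDisc q) : PhiMap q a = phi q a (eV (0, 0)) := rfl

lemma key_span (q : ℝ) (a : QDisc q) : PsiMap q (PhiMap q a) = a := by
  have : a ∈ LinearMap.ker ((PsiMap q ∘ₗ PhiMap q) - LinearMap.id) := by
    apply genLemma q
    · simp [LinearMap.mem_ker, PhiMap_apply, map_one, PsiMap_eV]
    · intro b hb
      simp only [LinearMap.mem_ker, LinearMap.sub_apply, LinearMap.comp_apply,
        LinearMap.id_apply, sub_eq_zero] at hb ⊢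
      rw [PhiMap_apply, map_mul, phi_x]
      have := congrArg (fun f => f (PhiMap q b)) (Psi_X q)
      simp only [LinearMap.comp_apply, LinearMap.mulLeft_apply] at this
      rw [Module.End.mul_apply, ← PhiMap_apply, this, hb]
    · intro b hb
      simp only [LinearMap.mem_ker, LinearMap.sub_apply, LinearMap.comp_apply,
        LinearMap.id_apply, sub_eq_zero] at hb ⊢
      rw [PhiMap_apply, map_mul, phi_xs]
      have := congrArg (fun f => f (PhiMap q b)) (Psi_Xs q)
      simp only [LinearMap.comp_apply, LinearMap.mulLeft_apply] at this
      rw [Module.End.mul_apply, ← PhiMap_apply, this, hb]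
  simpa [LinearMap.mem_ker, sub_eq_zero] using this

lemma phi_inj (q : ℝ) : Function.Injective (phi q) := by
  intro a b hab
  have : PhiMap q a = PhiMap q b := by rw [PhiMap_apply, PhiMap_apply, hab]
  rw [← key_span q a, ← key_span q b, this]

lemma left_case (q : ℝ) (hq : (q:ℂ) ≠ 0) (a : QDisc q)
    (h : (1 - xq q * xsq q) * a = 0) : a = 0 := by
  have hphi : phi q (1 - xq q * xsq q) = (1 - Sop) * Dop q := by
    rw [map_sub, map_one, map_mul, phi_x, phi_xs, uV_eq]
  have hinj : Function.Injective (phi q (1 - xq q * xsq q)) := by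
    rw [hphi]
    exact Sop_inj.comp (Dop_inj q hq)
  have h0 : phi q a = 0 := by
    have := congrArg (phi q) h
    rw [map_mul, map_zero] at this
    apply LinearMap.ext
    intro v
    have hv : phi q (1 - xq q * xsq q) (phi q a v) = 0 := by
      rw [← Module.End.mul_apply, this]; rfl
    have := hinj (a₁ := phi q a v) (a₂ := 0) (by simpa using hv)
    simpa using this
  exact phi_inj q (by simpa using h0)

open MulOpposite in
def gGen (q : ℝ) : Fin 2 → (QDisc q)ᵐᵒᵖ := ![op (xsq q), op (xq q)]

open MulOpposite in
def Ghom (q : ℝ) : FreeDisc →ₐ[ℂ] (QDisc q)ᵐᵒᵖ := FreeAlgebra.lift ℂ (gGen q)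

open MulOpposite in
lemma Ghom_rel (q : ℝ) : ∀ ⦃a b⦄, discRel q a b → Ghom q a = Ghom q b := by
  rintro a b ⟨rfl, rfl⟩
  simp only [map_mul, map_add, map_smul, map_one, Ghom, FreeAlgebra.lift_ι_apply, gGen,
    Matrix.cons_val_zero, Matrix.cons_val_one, Matrix.head_cons]
  rw [← op_mul, ← op_mul, ← op_smul, ← op_one, ← op_smul, ← op_add]
  exact congrArg op (relQ q)

def psiOp (q : ℝ) : QDisc q →ₐ[ℂ] (QDisc q)ᵐᵒᵖ :=
  RingQuot.liftAlgHom ℂ ⟨Ghom q, Ghom_rel q⟩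

open MulOpposite in
lemma psiOp_x (q : ℝ) : psiOp q (xq q) = op (xsq q) := by
  rw [xq, psiOp, RingQuot.liftAlgHom_mkAlgHom_apply]
  simp [Ghom, gGen]

open MulOpposite in
lemma psiOp_xs (q : ℝ) : psiOp q (xsq q) = op (xq q) := by
  rw [xsq, psiOp, RingQuot.liftAlgHom_mkAlgHom_apply]
  simp [Ghom, gGen]

open MulOpposite in
/-- χ : a ↦ unop (ψ a), the canonical antiautomorphism. -/
def chi (q : ℝ) : QDisc q →ₗ[ℂ] QDisc q :=
  (opLinearEquiv ℂ).symm.toLinearMap ∘ₗ (psiOp q).toLinearMap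

open MulOpposite in
lemma chi_apply (q : ℝ) (a : QDisc q) : chi q a = unop (psiOp q a) := rfl

open MulOpposite in
lemma chi_mul_x (q : ℝ) (a : QDisc q) : chi q (xq q * a) = chi q a * xsq q := by
  simp only [chi_apply, map_mul, psiOp_x]
  rfl

open MulOpposite in
lemma chi_mul_xs (q : ℝ) (a : QDisc q) : chi q (xsq q * a) = chi q a * xq q := by
  simp only [chi_apply, map_mul, psiOp_xs]
  rfl

open MulOpposite in
lemma chi_x_mul (q : ℝ) (a : QDisc q) : chi q (a * xsq q) = xq q * chi q a := by
  simp only [chi_apply, map_mul, psiOp_xs]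
  rfl

open MulOpposite in
lemma chi_xs_mul (q : ℝ) (a : QDisc q) : chi q (a * xq q) = xsq q * chi q a := by
  simp only [chi_apply, map_mul, psiOp_x]
  rfl

lemma chi_chi (q : ℝ) (a : QDisc q) : chi q (chi q a) = a := by
  have : a ∈ LinearMap.ker ((chi q ∘ₗ chi q) - LinearMap.id) := by
    apply genLemma q
    · simp [LinearMap.mem_ker, chi_apply, map_one]
    · intro b hb
      simp only [LinearMap.mem_ker, LinearMap.sub_apply, LinearMap.comp_apply,
        LinearMap.id_apply, sub_eq_zero] at hb ⊢
      rw [chi_mul_x, chi_x_mul, hb]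
    · intro b hb
      simp only [LinearMap.mem_ker, LinearMap.sub_apply, LinearMap.comp_apply,
        LinearMap.id_apply, sub_eq_zero] at hb ⊢
      rw [chi_mul_xs, chi_xs_mul, hb]
  simpa [LinearMap.mem_ker, sub_eq_zero] using this

/-- For 0 < q < 1, the element 1 - x x* is neither a left nor a right zero
divisor in P(D_q). -/
theorem one_sub_xxstar_not_zero_divisor (q : ℝ) (hq0 : 0 < q) (hq1 : q < 1) :
    ∀ a : QDisc q,
      ((1 - xq q * xsq q) * a = 0 ∨ a * (1 - xq q * xsq q) = 0) → a = 0 := by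
  have hq : (q:ℂ) ≠ 0 := by
    exact_mod_cast ne_of_gt hq0
  intro a h
  rcases h with h | h
  · exact left_case q hq a h
  · -- use the antiautomorphism
    have hu : psiOp q (1 - xq q * xsq q) = MulOpposite.op (1 - xq q * xsq q) := by
      rw [map_sub, map_one, map_mul, psiOp_x, psiOp_xs, ← MulOpposite.op_mul,
        ← MulOpposite.op_one, ← MulOpposite.op_sub]
    have h2 : (1 - xq q * xsq q) * chi q a = 0 := by
      have hc := congrArg (chi q) h
      rw [map_zero] at hc
      rw [chi_apply, map_mul, hu, MulOpposite.unop_mul, MulOpposite.unop_op,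
        ← chi_apply] at hc
      exact hc
    have h3 : chi q a = 0 := left_case q hq _ h2
    have := congrArg (chi q) h3
    rw [chi_chi, map_zero] at this
    exact this
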